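/- Let Λ₁ → Λ ← Λ₂ be ring maps with at least one surjective, Λ₁₂ = Λ₁ ×_Λ Λ₂ the fiber product ring. If V₁ ⊆ Λ₁^n and V₂ ⊆ Λ₂^n are direct summands (as left modules) whose images in Λ^n agree with a common direct summand V, then Ṽ = V₁ ×_V V₂ is a direct summand of Λ₁₂^n ≅ (Λ₁ ×_Λ Λ₂)^n. -/

import Mathlib

/-- The coordinatewise map induced by a ring homomorphism `p`, as a `p`-semilinear map. -/
def piMap {A B : Type} [Ring A] [Ring B] (p : A →+* B) (n : ℕ) :
    (Fin n → A) →ₛₗ[p] (Fin n → B) where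
  toFun v i := p (v i)
  map_add' u v := by funext i; simp
  map_smul' c v := by funext i; simp

section Bar

variable {A B : Type} [Ring A] [Ring B] (f : A →+* B) {n : ℕ}

/-- Every endomorphism of `Fin n → A` is determined by its values on basis vectors. -/
theorem end_eq_sum (e : (Fin n → A) →ₗ[A] (Fin n → A)) (v : Fin n → A) :
    e v = ∑ j : Fin n, v j • e (Pi.single j 1) := by
  conv_lhs => rw [← Finset.univ_sum_single v]
  rw [map_sum]
  congr 1
  funext j
  rw [← map_smul]
  congr 1
  funext k
  simp [Pi.single_apply, Pi.smul_apply]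

/-- The induced endomorphism on `Fin n → B` from one on `Fin n → A`. -/
def barMap (e : (Fin n → A) →ₗ[A] (Fin n → A)) : (Fin n → B) →ₗ[B] (Fin n → B) where
  toFun w := ∑ j : Fin n, w j • piMap f n (e (Pi.single j 1))
  map_add' u v := by simp [add_smul, Finset.sum_add_distrib]
  map_smul' c v := by simp [Finset.smul_sum, smul_smul]

theorem barMap_apply (e : (Fin n → A) →ₗ[A] (Fin n → A)) (w : Fin n → B) :
    barMap f e w = ∑ j : Fin n, w j • piMap f n (e (Pi.single j 1)) := rfl

theorem barMap_comm (e : (Fin n → A) →ₗ[A] (Fin n → A)) (v : Fin n → A) :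
    barMap f e (piMap f n v) = piMap f n (e v) := by
  rw [end_eq_sum e v, map_sum, barMap_apply]
  congr 1
  funext j
  rw [LinearMap.map_smulₛₗ]
  rfl

theorem piMap_single_one (j : Fin n) :
    piMap f n (Pi.single j 1) = Pi.single j (1 : B) := by
  funext i
  simp only [piMap, LinearMap.coe_mk, AddHom.coe_mk]
  rcases eq_or_ne i j with h | h <;> simp [h, Pi.single_apply]

theorem barMap_single (e : (Fin n → A) →ₗ[A] (Fin n → A)) (j : Fin n) :
    barMap f e (Pi.single j 1) = piMap f n (e (Pi.single j 1)) := by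
  rw [← piMap_single_one f j, barMap_comm]

theorem barMap_add (a b : (Fin n → A) →ₗ[A] (Fin n → A)) :
    barMap f (a + b) = barMap f a + barMap f b := by
  refine LinearMap.ext fun w => ?_
  simp [barMap_apply, smul_add, Finset.sum_add_distrib]

theorem barMap_comp (a b : (Fin n → A) →ₗ[A] (Fin n → A)) :
    barMap f (a ∘ₗ b) = barMap f a ∘ₗ barMap f b := by
  refine LinearMap.ext fun w => ?_
  simp only [LinearMap.comp_apply, barMap_apply f b, map_sum]
  rw [barMap_apply]
  congr 1
  funext j
  rw [map_smul, barMap_comm]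
  rfl

theorem barMap_id : barMap f (LinearMap.id : (Fin n → A) →ₗ[A] _) = LinearMap.id := by
  refine LinearMap.ext fun w => ?_
  simp only [barMap_apply, LinearMap.id_coe, id_eq]
  rw [← Finset.univ_sum_single w]
  congr 1
  funext j
  rw [piMap_single_one]
  funext k
  simp [Pi.single_apply]

end Bar

section OfMat

variable {A : Type} [Ring A] {n : ℕ}

/-- The endomorphism of `Fin n → A` given by rows `X j`. -/
def ofMat (X : Fin n → (Fin n → A)) : (Fin n → A) →ₗ[A] (Fin n → A) where
  toFun v := ∑ j : Fin n, v j • X j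
  map_add' u v := by simp [add_smul, Finset.sum_add_distrib]
  map_smul' c v := by simp [Finset.smul_sum, smul_smul]

theorem ofMat_apply (X : Fin n → (Fin n → A)) (v : Fin n → A) :
    ofMat X v = ∑ j : Fin n, v j • X j := rfl

theorem ofMat_single (X : Fin n → (Fin n → A)) (j : Fin n) :
    ofMat X (Pi.single j 1) = X j := by
  rw [ofMat_apply]
  rw [Finset.sum_eq_single j]
  · simp
  · intro k _ hk
    simp [Pi.single_apply, Ne.symm hk]
  · simp

end OfMat

theorem helper {Λ₁ Λ₂ Λ R : Type} [Ring Λ₁] [Ring Λ₂] [Ring Λ] [Ring R]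
    (f₁ : Λ₁ →+* Λ) (f₂ : Λ₂ →+* Λ) (hsurj : Function.Surjective f₂)
    (g₁ : R →+* Λ₁) (g₂ : R →+* Λ₂)
    (hlift : ∀ a₁ a₂, f₁ a₁ = f₂ a₂ → ∃ r, g₁ r = a₁ ∧ g₂ r = a₂)
    (hinj : ∀ r s : R, g₁ r = g₁ s → g₂ r = g₂ s → r = s)
    {n : ℕ} (V₁ : Submodule Λ₁ (Fin n → Λ₁)) (V₂ : Submodule Λ₂ (Fin n → Λ₂))
    (V : Submodule Λ (Fin n → Λ))
    (h₁ : ∃ C, IsCompl V₁ C) (h₂ : ∃ C, IsCompl V₂ C)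
    (him₁ : (fun v : Fin n → Λ₁ => fun i => f₁ (v i)) '' ↑V₁ = ↑V)
    (him₂ : (fun v : Fin n → Λ₂ => fun i => f₂ (v i)) '' ↑V₂ = ↑V) :
    ∃ C, IsCompl (Submodule.comap (piMap g₁ n) V₁ ⊓ Submodule.comap (piMap g₂ n) V₂) C := by
  obtain ⟨C₁, hC₁⟩ := h₁
  obtain ⟨C₂, hC₂⟩ := h₂
  set e₁ : (Fin n → Λ₁) →ₗ[Λ₁] (Fin n → Λ₁) :=
    V₁.subtype ∘ₗ V₁.linearProjOfIsCompl C₁ hC₁ with he₁def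
  set e₂ : (Fin n → Λ₂) →ₗ[Λ₂] (Fin n → Λ₂) :=
    V₂.subtype ∘ₗ V₂.linearProjOfIsCompl C₂ hC₂ with he₂def
  have he₁mem : ∀ v, e₁ v ∈ V₁ := fun v => (V₁.linearProjOfIsCompl C₁ hC₁ v).2
  have he₂mem : ∀ v, e₂ v ∈ V₂ := fun v => (V₂.linearProjOfIsCompl C₂ hC₂ v).2
  have he₁fix : ∀ v ∈ V₁, e₁ v = v := by
    intro v hv
    have := Submodule.linearProjOfIsCompl_apply_left hC₁ ⟨v, hv⟩
    exact congrArg Subtype.val this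
  have he₂fix : ∀ v ∈ V₂, e₂ v = v := by
    intro v hv
    have := Submodule.linearProjOfIsCompl_apply_left hC₂ ⟨v, hv⟩
    exact congrArg Subtype.val this
  -- images in Λⁿ
  have hmem₁ : ∀ v ∈ V₁, piMap f₁ n v ∈ V := by
    intro v hv
    have : (fun i => f₁ (v i)) ∈ (↑V : Set (Fin n → Λ)) := him₁ ▸ Set.mem_image_of_mem _ hv
    exact this
  have hmem₂ : ∀ v ∈ V₂, piMap f₂ n v ∈ V := by
    intro v hv
    have : (fun i => f₂ (v i)) ∈ (↑V : Set (Fin n → Λ)) := him₂ ▸ Set.mem_image_of_mem _ hv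
    exact this
  set p := barMap f₁ e₁ with hpdef
  set q := barMap f₂ e₂ with hqdef
  have hpV : ∀ w, p w ∈ V := by
    intro w
    rw [hpdef, barMap_apply]
    exact Submodule.sum_mem _ fun j _ => Submodule.smul_mem _ _ (hmem₁ _ (he₁mem _))
  have hqV : ∀ w, q w ∈ V := by
    intro w
    rw [hqdef, barMap_apply]
    exact Submodule.sum_mem _ fun j _ => Submodule.smul_mem _ _ (hmem₂ _ (he₂mem _))
  have hpfix : ∀ w ∈ V, p w = w := by
    intro w hw
    obtain ⟨v, hv, rfl⟩ : ∃ v ∈ V₁, piMap f₁ n v = w := by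
      have : w ∈ (fun v : Fin n → Λ₁ => fun i => f₁ (v i)) '' ↑V₁ := him₁ ▸ hw
      obtain ⟨v, hv, hvw⟩ := this
      exact ⟨v, hv, hvw⟩
    rw [hpdef, barMap_comm, he₁fix v hv]
  have hqfix : ∀ w ∈ V, q w = w := by
    intro w hw
    obtain ⟨v, hv, rfl⟩ : ∃ v ∈ V₂, piMap f₂ n v = w := by
      have : w ∈ (fun v : Fin n → Λ₂ => fun i => f₂ (v i)) '' ↑V₂ := him₂ ▸ hw
      obtain ⟨v, hv, hvw⟩ := this
      exact ⟨v, hv, hvw⟩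
    rw [hqdef, barMap_comm, he₂fix v hv]
  -- lift y = p - q to Λ₂
  set y : (Fin n → Λ) →ₗ[Λ] (Fin n → Λ) := p - q with hydef
  set X : Fin n → Fin n → Λ₂ := fun j i => (hsurj ((y (Pi.single j 1)) i)).choose with hXdef
  have hX : ∀ j i, f₂ (X j i) = (y (Pi.single j 1)) i :=
    fun j i => (hsurj ((y (Pi.single j 1)) i)).choose_spec
  set x : (Fin n → Λ₂) →ₗ[Λ₂] (Fin n → Λ₂) := ofMat X with hxdef
  have hbarx : barMap f₂ x = y := by
    refine LinearMap.ext fun w => ?_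
    rw [barMap_apply, end_eq_sum y w]
    congr 1
    funext j
    congr 1
    rw [hxdef, ofMat_single]
    funext i
    exact hX j i
  set e₂' : (Fin n → Λ₂) →ₗ[Λ₂] (Fin n → Λ₂) :=
    e₂ + e₂ ∘ₗ x ∘ₗ (LinearMap.id - e₂) with he₂'def
  have barMap_sub : ∀ (a b : (Fin n → Λ₂) →ₗ[Λ₂] (Fin n → Λ₂)),
      barMap f₂ (a - b) = barMap f₂ a - barMap f₂ b := by
    intro a b
    refine LinearMap.ext fun w => ?_
    simp [barMap_apply, LinearMap.sub_apply, map_sub, smul_sub, Finset.sum_sub_distrib]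
  have key : barMap f₂ e₂' = p := by
    rw [he₂'def, barMap_add, barMap_comp, barMap_comp, barMap_sub, barMap_id, hbarx, ← hqdef]
    refine LinearMap.ext fun w => ?_
    simp only [LinearMap.add_apply, LinearMap.comp_apply, LinearMap.sub_apply,
      LinearMap.id_apply, hydef]
    have h1 : q (q w) = q w := hqfix _ (hqV w)
    have h2 : p (q w) = q w := hpfix _ (hqV w)
    have h3 : q (p w) = p w := hqfix _ (hpV w)
    rw [map_sub, map_sub, map_sub, map_sub, map_sub, h1, h2, h3]
    abel
  have he₂'mem : ∀ v, e₂' v ∈ V₂ := by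
    intro v
    rw [he₂'def]
    exact Submodule.add_mem _ (he₂mem v) (he₂mem _)
  have he₂'fix : ∀ v ∈ V₂, e₂' v = v := by
    intro v hv
    rw [he₂'def]
    simp only [LinearMap.add_apply, LinearMap.comp_apply, LinearMap.sub_apply,
      LinearMap.id_apply]
    rw [he₂fix v hv, sub_self, map_zero, map_zero, add_zero]
  -- matrix entries over R
  have hent : ∀ j i, f₁ ((e₁ (Pi.single j 1)) i) = f₂ ((e₂' (Pi.single j 1)) i) := by
    intro j i
    have h := DFunLike.congr_fun key (Pi.single j 1)
    rw [barMap_single, hpdef, barMap_single] at h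
    exact (congrFun h i).symm
  set rr : Fin n → Fin n → R := fun j i => (hlift _ _ (hent j i)).choose with hrrdef
  have hrr₁ : ∀ j i, g₁ (rr j i) = (e₁ (Pi.single j 1)) i :=
    fun j i => (hlift _ _ (hent j i)).choose_spec.1
  have hrr₂ : ∀ j i, g₂ (rr j i) = (e₂' (Pi.single j 1)) i :=
    fun j i => (hlift _ _ (hent j i)).choose_spec.2
  set E : (Fin n → R) →ₗ[R] (Fin n → R) := ofMat (fun j => rr j) with hEdef
  have hE₁ : ∀ v, piMap g₁ n (E v) = e₁ (piMap g₁ n v) := by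
    intro v
    rw [end_eq_sum e₁, hEdef, ofMat_apply, map_sum]
    congr 1
    funext j
    rw [LinearMap.map_smulₛₗ]
    congr 1
    funext i
    exact hrr₁ j i
  have hE₂ : ∀ v, piMap g₂ n (E v) = e₂' (piMap g₂ n v) := by
    intro v
    rw [end_eq_sum e₂', hEdef, ofMat_apply, map_sum]
    congr 1
    funext j
    rw [LinearMap.map_smulₛₗ]
    congr 1
    funext i
    exact hrr₂ j i
  have hmemT : ∀ v, E v ∈
      Submodule.comap (piMap g₁ n) V₁ ⊓ Submodule.comap (piMap g₂ n) V₂ := by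
    intro v
    refine ⟨?_, ?_⟩
    · show piMap g₁ n (E v) ∈ V₁
      rw [hE₁]; exact he₁mem _
    · show piMap g₂ n (E v) ∈ V₂
      rw [hE₂]; exact he₂'mem _
  have hfixT : ∀ v ∈ Submodule.comap (piMap g₁ n) V₁ ⊓ Submodule.comap (piMap g₂ n) V₂,
      E v = v := by
    intro v hv
    funext i
    refine hinj _ _ ?_ ?_
    · have : piMap g₁ n (E v) = piMap g₁ n v := by
        rw [hE₁, he₁fix _ hv.1]
      exact congrFun this i
    · have : piMap g₂ n (E v) = piMap g₂ n v := by
        rw [hE₂, he₂'fix _ hv.2]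
      exact congrFun this i
  refine ⟨LinearMap.ker (E.codRestrict _ hmemT), LinearMap.isCompl_of_proj ?_⟩
  intro z
  exact Subtype.ext (hfixT z z.2)

/-- Milnor patching for direct summands: given ring maps `Λ₁ → Λ ← Λ₂` with at least one
surjective, and direct summands `V₁ ⊆ Λ₁ⁿ`, `V₂ ⊆ Λ₂ⁿ` whose images in `Λⁿ` agree with a
common direct summand `V`, the fiber product `Ṽ = V₁ ×_V V₂` is a direct summand of
`(Λ₁ ×_Λ Λ₂)ⁿ`. -/
theorem fiber_product_of_direct_summands_is_direct_summand
    (Λ₁ Λ₂ Λ : Type) [Ring Λ₁] [Ring Λ₂] [Ring Λ]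
    (f₁ : Λ₁ →+* Λ) (f₂ : Λ₂ →+* Λ)
    (hsurj : Function.Surjective f₁ ∨ Function.Surjective f₂) (n : ℕ)
    (V₁ : Submodule Λ₁ (Fin n → Λ₁)) (V₂ : Submodule Λ₂ (Fin n → Λ₂))
    (V : Submodule Λ (Fin n → Λ))
    (h₁ : ∃ C, IsCompl V₁ C) (h₂ : ∃ C, IsCompl V₂ C) (hV : ∃ C, IsCompl V C)
    (him₁ : (fun v : Fin n → Λ₁ => fun i => f₁ (v i)) '' ↑V₁ = ↑V)
    (him₂ : (fun v : Fin n → Λ₂ => fun i => f₂ (v i)) '' ↑V₂ = ↑V) :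
    ∃ C, IsCompl
      (Submodule.comap
          (piMap ((RingHom.fst Λ₁ Λ₂).comp
            (RingHom.eqLocus (f₁.comp (RingHom.fst Λ₁ Λ₂))
              (f₂.comp (RingHom.snd Λ₁ Λ₂))).subtype) n) V₁ ⊓
        Submodule.comap
          (piMap ((RingHom.snd Λ₁ Λ₂).comp
            (RingHom.eqLocus (f₁.comp (RingHom.fst Λ₁ Λ₂))
              (f₂.comp (RingHom.snd Λ₁ Λ₂))).subtype) n) V₂) C := by
  set S := RingHom.eqLocus (f₁.comp (RingHom.fst Λ₁ Λ₂)) (f₂.comp (RingHom.snd Λ₁ Λ₂))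
    with hSdef
  set g₁ : S →+* Λ₁ := (RingHom.fst Λ₁ Λ₂).comp S.subtype with hg₁def
  set g₂ : S →+* Λ₂ := (RingHom.snd Λ₁ Λ₂).comp S.subtype with hg₂def
  have hlift : ∀ a₁ a₂, f₁ a₁ = f₂ a₂ → ∃ r : S, g₁ r = a₁ ∧ g₂ r = a₂ := by
    intro a₁ a₂ h
    exact ⟨⟨(a₁, a₂), h⟩, rfl, rfl⟩
  have hinj : ∀ r s : S, g₁ r = g₁ s → g₂ r = g₂ s → r = s := by
    intro r s hr hs
    exact Subtype.ext (Prod.ext hr hs)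
  rcases hsurj with hs | hs
  · have hlift' : ∀ a₂ a₁, f₂ a₂ = f₁ a₁ → ∃ r : S, g₂ r = a₂ ∧ g₁ r = a₁ := by
      intro a₂ a₁ h
      obtain ⟨r, h1, h2⟩ := hlift a₁ a₂ h.symm
      exact ⟨r, h2, h1⟩
    have hinj' : ∀ r s : S, g₂ r = g₂ s → g₁ r = g₁ s → r = s :=
      fun r s hr hs => hinj r s hs hr
    obtain ⟨C, hC⟩ := helper f₂ f₁ hs g₂ g₁ hlift' hinj' V₂ V₁ V h₂ h₁ him₂ him₁
    exact ⟨C, by rwa [inf_comm] at hC⟩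
  · exact helper f₁ f₂ hs g₁ g₂ hlift hinj V₁ V₂ V h₁ h₂ him₁ him₂
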